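/- Let (X_i)_{i∈ι} be a family of Lip-spaces. The family is uniform if and only if the following two conditions hold: (a) there exists a constant R > 0 such that ‖x‖ ≤ R‖x‖_L for every i ∈ ι and every x ∈ X_i; and (b) for every ε > 0 there exists N_ε ∈ ℕ such that every member X_i has a linear subspace V ⊆ X_i of dimension at most N_ε such that the set {x ∈ V : ‖x‖_L ≤ 1} is ε-dense (in the norm ‖·‖) in the set {x ∈ X_i : ‖x‖_L ≤ 1}. -/

import Mathlib

open scoped ENNReal

/-- A Lip-space: a real Banach space `X` together with an extended-real-valued "Lip-norm"
`lipNorm : X → [0,∞]` which is finite on a dense linear subspace on which it is a norm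
(subadditive, absolutely homogeneous, vanishing only at `0`), and whose unit ball
`{x : X | lipNorm x ≤ 1}` is compact in the norm topology of `X`. -/
structure LipSpace (X : Type*) [NormedAddCommGroup X] [NormedSpace ℝ X] [CompleteSpace X] where
  lipNorm : X → ℝ≥0∞
  lipNorm_add_le : ∀ x y : X, lipNorm (x + y) ≤ lipNorm x + lipNorm y
  lipNorm_smul : ∀ (c : ℝ) (x : X), lipNorm (c • x) = (‖c‖₊ : ℝ≥0∞) * lipNorm x
  lipNorm_eq_zero : ∀ x : X, lipNorm x = 0 → x = 0
  dense_finite : Dense {x : X | lipNorm x < ⊤}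
  isCompact_unitBall : IsCompact {x : X | lipNorm x ≤ 1}

open Metric MeasureTheory Module

private lemma packing_bound {V : Type*} [NormedAddCommGroup V] [NormedSpace ℝ V]
    [FiniteDimensional ℝ V] {R ε : ℝ} (hR : 0 < R) (hε : 0 < ε) {s : Finset V}
    (hs : ∀ x ∈ s, x ∈ Metric.closedBall (0:V) R)
    (hsep : ∀ x ∈ s, ∀ y ∈ s, x ≠ y → ε ≤ dist x y) :
    (s.card : ℝ) ≤ ((R + ε/2)/(ε/2)) ^ (finrank ℝ V) := by
  letI : MeasurableSpace V := borel V
  haveI : BorelSpace V := ⟨rfl⟩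
  set μ : Measure V := (Module.finBasis ℝ V).addHaar with hμ
  have hε2 : (0:ℝ) < ε/2 := by linarith
  have hdisj : (s : Set V).PairwiseDisjoint (fun x => Metric.ball x (ε/2)) := by
    intro x hx y hy hxy
    apply Set.disjoint_left.2
    intro z hzx hzy
    have : dist x y < ε := by
      have h1 := mem_ball'.1 hzx
      have h2 := mem_ball.1 hzy
      have h2' : dist z y < ε/2 := by rwa [dist_comm] at h2
      calc dist x y ≤ dist x z + dist z y := dist_triangle _ _ _
        _ < ε/2 + ε/2 := add_lt_add h1 h2'
        _ = ε := by ring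
    exact absurd this (not_lt.2 (hsep x hx y hy hxy))
  have hsum : μ (⋃ x ∈ s, Metric.ball x (ε/2)) = ∑ x ∈ s, μ (Metric.ball x (ε/2)) :=
    measure_biUnion_finset hdisj (fun x _ => measurableSet_ball)
  have hball : ∀ x : V, μ (Metric.ball x (ε/2))
      = ENNReal.ofReal ((ε/2) ^ finrank ℝ V) * μ (Metric.ball 0 1) :=
    fun x => Measure.addHaar_ball_of_pos μ x hε2
  have hsub : (⋃ x ∈ s, Metric.ball x (ε/2)) ⊆ Metric.closedBall (0:V) (R + ε/2) := by
    intro z hz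
    rcases Set.mem_iUnion₂.1 hz with ⟨x, hx, hzx⟩
    have h1 : dist z x < ε/2 := mem_ball.1 hzx
    have h2 : dist x (0:V) ≤ R := mem_closedBall.1 (hs x hx)
    have := dist_triangle z x (0:V)
    exact mem_closedBall.2 (by linarith)
  have hcb : μ (Metric.closedBall (0:V) (R + ε/2))
      = ENNReal.ofReal ((R + ε/2) ^ finrank ℝ V) * μ (Metric.ball 0 1) :=
    Measure.addHaar_closedBall μ 0 (by linarith)
  have hpos : μ (Metric.ball (0:V) 1) ≠ 0 :=
    (measure_ball_pos μ 0 one_pos).ne'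
  have hfin : μ (Metric.ball (0:V) 1) ≠ ⊤ :=
    measure_ball_lt_top.ne
  have key : (s.card : ℝ≥0∞) * ENNReal.ofReal ((ε/2) ^ finrank ℝ V)
      ≤ ENNReal.ofReal ((R + ε/2) ^ finrank ℝ V) := by
    have h1 : (s.card : ℝ≥0∞) * (ENNReal.ofReal ((ε/2) ^ finrank ℝ V) * μ (Metric.ball 0 1))
        ≤ ENNReal.ofReal ((R + ε/2) ^ finrank ℝ V) * μ (Metric.ball 0 1) := by
      calc (s.card : ℝ≥0∞) * (ENNReal.ofReal ((ε/2) ^ finrank ℝ V) * μ (Metric.ball 0 1))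
          = ∑ x ∈ s, μ (Metric.ball x (ε/2)) := by
            rw [Finset.sum_congr rfl (fun x _ => hball x), Finset.sum_const, nsmul_eq_mul]
        _ = μ (⋃ x ∈ s, Metric.ball x (ε/2)) := hsum.symm
        _ ≤ μ (Metric.closedBall (0:V) (R + ε/2)) := measure_mono hsub
        _ = ENNReal.ofReal ((R + ε/2) ^ finrank ℝ V) * μ (Metric.ball 0 1) := hcb
    rw [← mul_assoc] at h1
    exact (ENNReal.mul_le_mul_iff_left hpos hfin).1 h1
  have hppos : (0:ℝ) < (ε/2) ^ finrank ℝ V := pow_pos hε2 _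
  have key2 : (s.card : ℝ) * ((ε/2) ^ finrank ℝ V) ≤ (R + ε/2) ^ finrank ℝ V := by
    have : ENNReal.ofReal ((s.card : ℝ) * ((ε/2) ^ finrank ℝ V))
        ≤ ENNReal.ofReal ((R + ε/2) ^ finrank ℝ V) := by
      rw [ENNReal.ofReal_mul (by positivity)]
      simpa [ENNReal.ofReal_natCast] using key
    exact (ENNReal.ofReal_le_ofReal_iff (by positivity)).1 this
  rw [div_pow, le_div_iff₀ hppos]
  exact key2

private lemma exists_net {V : Type*} [NormedAddCommGroup V] [NormedSpace ℝ V]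
    [FiniteDimensional ℝ V] {R ε : ℝ} (hR : 0 < R) (hε : 0 < ε) {D : Set V}
    (hD : D ⊆ Metric.closedBall 0 R) :
    ∃ s : Finset V, ↑s ⊆ D ∧ (s.card : ℝ) ≤ ((R + ε/2)/(ε/2)) ^ (finrank ℝ V) ∧
      ∀ x ∈ D, ∃ y ∈ s, dist x y ≤ ε := by
  classical
  set B : ℝ := ((R + ε/2)/(ε/2)) ^ (finrank ℝ V) with hB
  set M : ℕ := ⌊B⌋₊ with hM
  set P : ℕ → Prop := fun k => ∃ s : Finset V, ↑s ⊆ D ∧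
    (∀ x ∈ s, ∀ y ∈ s, x ≠ y → ε ≤ dist x y) ∧ s.card = k with hP
  have cardle : ∀ s : Finset V, ↑s ⊆ D →
      (∀ x ∈ s, ∀ y ∈ s, x ≠ y → ε ≤ dist x y) → s.card ≤ M := by
    intro s hsD hsep
    have := packing_bound hR hε (fun x hx => hD (hsD hx)) hsep
    exact Nat.le_floor this
  have h0 : P 0 := ⟨∅, by simp, by simp, rfl⟩
  have hex : P (Nat.findGreatest P M) := Nat.findGreatest_spec (Nat.zero_le M) h0
  obtain ⟨s, hsD, hsep, hscard⟩ := hex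
  refine ⟨s, hsD, ?_, ?_⟩
  · exact packing_bound hR hε (fun x hx => hD (hsD hx)) hsep
  · intro x hx
    by_contra hcon
    push_neg at hcon
    have hcon' : ∀ y ∈ s, ε < dist x y := fun y hy => hcon y hy
    have hxs : x ∉ s := by
      intro h
      have := hcon' x h
      rw [dist_self] at this
      linarith
    set s' := insert x s with hs'
    have hs'D : ↑s' ⊆ D := by
      rw [hs', Finset.coe_insert]
      exact Set.insert_subset hx hsD
    have hs'sep : ∀ a ∈ s', ∀ b ∈ s', a ≠ b → ε ≤ dist a b := by
      intro a ha b hb hab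
      rw [hs', Finset.mem_insert] at ha hb
      rcases ha with rfl | ha
      · rcases hb with rfl | hb
        · exact absurd rfl hab
        · exact (hcon' b hb).le
      · rcases hb with rfl | hb
        · rw [dist_comm]; exact (hcon' a ha).le
        · exact hsep a ha b hb hab
    have hcard' : s'.card = s.card + 1 := Finset.card_insert_of_notMem hxs
    have hle : s'.card ≤ M := cardle s' hs'D hs'sep
    have : P (s.card + 1) := ⟨s', hs'D, hs'sep, hcard'⟩
    have hgt : s.card + 1 ≤ Nat.findGreatest P M :=
      Nat.le_findGreatest (hcard' ▸ hle) this
    omega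

private lemma fwdA {Y : Type*} [NormedAddCommGroup Y] [NormedSpace ℝ Y] [CompleteSpace Y]
    (L : LipSpace Y) {n : ℕ} {t : Finset Y} (ht : t.card ≤ n)
    (hcov : {x : Y | L.lipNorm x ≤ 1} ⊆ ⋃ c ∈ t, Metric.closedBall c 1)
    {x : Y} (hx : L.lipNorm x ≤ 1) : ‖x‖ ≤ 3 * (n + 1) := by
  by_contra hcon
  push_neg at hcon
  have hxpos : (0:ℝ) < ‖x‖ := lt_trans (by positivity) hcon
  set f : Fin (n+1) → Y := fun k => (((k:ℕ):ℝ) * 3 / ‖x‖) • x with hf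
  have hfmem : ∀ k : Fin (n+1), f k ∈ {y : Y | L.lipNorm y ≤ 1} := by
    intro k
    have hc : (0:ℝ) ≤ ((k:ℕ):ℝ) * 3 / ‖x‖ := by positivity
    have hc1 : ((k:ℕ):ℝ) * 3 / ‖x‖ ≤ 1 := by
      rw [div_le_one hxpos]
      have : ((k:ℕ):ℝ) ≤ n := by exact_mod_cast Nat.lt_succ_iff.1 k.2
      nlinarith
    have : L.lipNorm (f k) = (‖((k:ℕ):ℝ) * 3 / ‖x‖‖₊ : ℝ≥0∞) * L.lipNorm x :=
      L.lipNorm_smul _ x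
    rw [Set.mem_setOf_eq, this]
    calc (‖((k:ℕ):ℝ) * 3 / ‖x‖‖₊ : ℝ≥0∞) * L.lipNorm x
        ≤ 1 * 1 := by
          apply mul_le_mul' ?_ hx
          rw [← enorm_eq_nnnorm, Real.enorm_eq_ofReal hc]
          calc ENNReal.ofReal (((k:ℕ):ℝ) * 3 / ‖x‖) ≤ ENNReal.ofReal 1 :=
            ENNReal.ofReal_le_ofReal hc1
          _ = 1 := ENNReal.ofReal_one
      _ = 1 := one_mul 1
  classical
  choose g hg hgball using fun k => Set.mem_iUnion₂.1 (hcov (hfmem k))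
  obtain ⟨k, _, l, _, hkl, hgkl⟩ :=
    Finset.exists_ne_map_eq_of_card_lt_of_maps_to
      (s := (Finset.univ : Finset (Fin (n+1)))) (by simpa using Nat.lt_succ_of_le ht)
      (fun k _ => hg k)
  have hdist : dist (f k) (f l) ≤ 2 := by
    calc dist (f k) (f l) ≤ dist (f k) (g k) + dist (g k) (f l) := dist_triangle _ _ _
      _ ≤ 1 + 1 := add_le_add (mem_closedBall.1 (hgball k))
          (by rw [dist_comm, hgkl]; exact mem_closedBall.1 (hgball l))
      _ = 2 := by norm_num
  have hdist3 : (3:ℝ) ≤ dist (f k) (f l) := by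
    have : f k - f l = ((((k:ℕ):ℝ) - ((l:ℕ):ℝ)) * 3 / ‖x‖) • x := by
      rw [hf]; rw [← sub_smul]; ring_nf
    rw [dist_eq_norm, this, norm_smul, Real.norm_eq_abs]
    have habs : (1:ℝ) ≤ |((k:ℕ):ℝ) - ((l:ℕ):ℝ)| := by
      have : (k:ℕ) ≠ (l:ℕ) := fun h => hkl (Fin.ext h)
      have := this.lt_or_gt
      rcases this with h | h
      · rw [abs_sub_comm]
        rw [le_abs]; left
        have : (k:ℕ) + 1 ≤ (l:ℕ) := h
        push_cast [← Nat.cast_le (α := ℝ)] at this ⊢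
        linarith [(Nat.cast_le (α := ℝ)).2 h]
      · rw [le_abs]; left
        have : (l:ℕ) + 1 ≤ (k:ℕ) := h
        have := (Nat.cast_le (α := ℝ)).2 this
        push_cast at this
        linarith
    rw [abs_div, abs_of_pos hxpos, div_mul_cancel₀ _ hxpos.ne', abs_mul]
    have : |(3:ℝ)| = 3 := by norm_num
    rw [this]
    nlinarith
  linarith

theorem stmt6 {ι : Type*} (X : ι → Type*) [∀ i, NormedAddCommGroup (X i)]
    [∀ i, NormedSpace ℝ (X i)] [∀ i, CompleteSpace (X i)] (S : ∀ i, LipSpace (X i)) :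
    (∀ ε : ℝ, 0 < ε → ∃ n : ℕ, ∀ i, ∃ t : Finset (X i), t.card ≤ n ∧
        {x : X i | (S i).lipNorm x ≤ 1} ⊆ ⋃ c ∈ t, Metric.closedBall c ε) ↔
      ((∃ R : ℝ, 0 < R ∧ ∀ i, ∀ x : X i,
          (‖x‖₊ : ℝ≥0∞) ≤ ENNReal.ofReal R * (S i).lipNorm x) ∧
        (∀ ε : ℝ, 0 < ε → ∃ N : ℕ, ∀ i, ∃ V : Submodule ℝ (X i),
          FiniteDimensional ℝ V ∧ Module.finrank ℝ V ≤ N ∧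
          ∀ x : X i, (S i).lipNorm x ≤ 1 →
            ∃ y ∈ V, (S i).lipNorm y ≤ 1 ∧ ‖x - y‖ ≤ ε)) := by
  classical
  constructor
  · intro H
    constructor
    · -- (a)
      obtain ⟨n, hn⟩ := H 1 one_pos
      refine ⟨3 * (n + 1), by positivity, fun i x => ?_⟩
      by_cases h0 : (S i).lipNorm x = 0
      · have : x = 0 := (S i).lipNorm_eq_zero x h0
        simp [this]
      by_cases htop : (S i).lipNorm x = ⊤
      · rw [htop, ENNReal.mul_top (by
          simp only [ne_eq, ENNReal.ofReal_eq_zero, not_le]; positivity)]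
        exact le_top
      have ht0 : 0 < ((S i).lipNorm x).toReal := ENNReal.toReal_pos h0 htop
      set t : ℝ := ((S i).lipNorm x).toReal with htdef
      have hxL : (S i).lipNorm (t⁻¹ • x) = 1 := by
        rw [(S i).lipNorm_smul, ← enorm_eq_nnnorm, Real.enorm_eq_ofReal (inv_nonneg.2 ht0.le),
          ← ENNReal.ofReal_toReal htop, ← htdef, ← ENNReal.ofReal_mul (inv_nonneg.2 ht0.le),
          inv_mul_cancel₀ ht0.ne', ENNReal.ofReal_one]
      obtain ⟨ti, hti, hcov⟩ := hn i
      have hb : ‖t⁻¹ • x‖ ≤ 3 * (n + 1) := fwdA (S i) hti hcov (le_of_eq hxL)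
      rw [norm_smul, Real.norm_eq_abs, abs_of_pos (inv_pos.2 ht0)] at hb
      have hxb : ‖x‖ ≤ 3 * (n + 1) * t := by
        rw [inv_mul_le_iff₀ ht0] at hb
        linarith [hb]
      calc (‖x‖₊ : ℝ≥0∞) = ENNReal.ofReal ‖x‖ := (ofReal_norm x).symm
        _ ≤ ENNReal.ofReal (3 * (n + 1) * t) := ENNReal.ofReal_le_ofReal hxb
        _ = ENNReal.ofReal (3 * (n + 1)) * ENNReal.ofReal t :=
            ENNReal.ofReal_mul (by positivity)
        _ = ENNReal.ofReal (3 * (n + 1)) * (S i).lipNorm x := by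
            rw [htdef, ENNReal.ofReal_toReal htop]
    · -- (b)
      intro ε hε
      obtain ⟨n, hn⟩ := H (ε/2) (half_pos hε)
      refine ⟨n, fun i => ?_⟩
      obtain ⟨t, htc, hcov⟩ := hn i
      set g : X i → X i := fun c =>
        if h : ∃ y, (S i).lipNorm y ≤ 1 ∧ y ∈ Metric.closedBall c (ε/2) then h.choose else 0
        with hg
      set s : Finset (X i) := t.image g with hs
      refine ⟨Submodule.span ℝ (s : Set (X i)), inferInstance, ?_, ?_⟩
      · calc finrank ℝ (Submodule.span ℝ (s : Set (X i))) ≤ s.card :=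
            finrank_span_finset_le_card s
          _ ≤ t.card := Finset.card_image_le
          _ ≤ n := htc
      · intro x hx
        obtain ⟨c, hc, hxc⟩ := Set.mem_iUnion₂.1 (hcov hx)
        have hexy : ∃ y, (S i).lipNorm y ≤ 1 ∧ y ∈ Metric.closedBall c (ε/2) := ⟨x, hx, hxc⟩
        have hgc : g c = hexy.choose := dif_pos hexy
        obtain ⟨hy1, hy2⟩ := hexy.choose_spec
        refine ⟨g c, ?_, ?_, ?_⟩
        · exact Submodule.subset_span (by
            simp only [hs, Finset.coe_image, Set.mem_image]
            exact ⟨c, hc, rfl⟩)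
        · rw [hgc]; exact hy1
        · rw [hgc, ← dist_eq_norm]
          calc dist x hexy.choose ≤ dist x c + dist c hexy.choose := dist_triangle _ _ _
            _ ≤ ε/2 + ε/2 := add_le_add (mem_closedBall.1 hxc)
                (by rw [dist_comm]; exact mem_closedBall.1 hy2)
            _ = ε := by ring
  · rintro ⟨⟨R, hR, ha⟩, hb⟩ ε hε
    have hδ : (0:ℝ) < ε/3 := by linarith
    obtain ⟨N, hN⟩ := hb (ε/3) hδ
    refine ⟨⌊((R + (ε/3)/2)/((ε/3)/2)) ^ N⌋₊, fun i => ?_⟩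
    obtain ⟨V, hVfd, hVrank, hVnet⟩ := hN i
    have hnorm_le : ∀ y : X i, (S i).lipNorm y ≤ 1 → ‖y‖ ≤ R := by
      intro y hy
      have h1 : (‖y‖₊ : ℝ≥0∞) ≤ ENNReal.ofReal R := by
        calc (‖y‖₊ : ℝ≥0∞) ≤ ENNReal.ofReal R * (S i).lipNorm y := ha i y
          _ ≤ ENNReal.ofReal R * 1 := mul_le_mul_right hy _
          _ = ENNReal.ofReal R := mul_one _
      rw [← enorm_eq_nnnorm, ← ofReal_norm] at h1
      exact (ENNReal.ofReal_le_ofReal_iff hR.le).1 h1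
    set D : Set V := {y : V | (S i).lipNorm (y : X i) ≤ 1} with hD
    have hDsub : D ⊆ Metric.closedBall 0 R := by
      intro y hy
      rw [mem_closedBall, dist_zero_right]
      calc ‖y‖ = ‖(y : X i)‖ := rfl
        _ ≤ R := hnorm_le _ hy
    obtain ⟨s, hsD, hscard, hsnet⟩ := exists_net hR hδ hDsub
    refine ⟨s.image (fun y : V => (y : X i)), ?_, ?_⟩
    · calc (s.image (fun y : V => (y : X i))).card ≤ s.card := Finset.card_image_le
        _ ≤ ⌊((R + (ε/3)/2)/((ε/3)/2)) ^ N⌋₊ := by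
            apply Nat.le_floor
            calc (s.card : ℝ) ≤ ((R + (ε/3)/2)/((ε/3)/2)) ^ (finrank ℝ V) := hscard
              _ ≤ ((R + (ε/3)/2)/((ε/3)/2)) ^ N := by
                  apply pow_le_pow_right₀ _ hVrank
                  rw [le_div_iff₀ (by linarith)]
                  linarith
    · intro x hx
      obtain ⟨y, hyV, hy1, hy2⟩ := hVnet x hx
      obtain ⟨z, hz, hzd⟩ := hsnet ⟨y, hyV⟩ hy1
      apply Set.mem_biUnion (Finset.mem_image_of_mem _ hz)
      rw [mem_closedBall]
      have hdyz : dist y (z : X i) = dist (⟨y, hyV⟩ : V) z := rfl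
      calc dist x (z : X i) ≤ dist x y + dist y (z : X i) := dist_triangle _ _ _
        _ ≤ ε/3 + ε/3 := add_le_add (by rw [dist_eq_norm]; exact hy2) (hdyz ▸ hzd)
        _ ≤ ε := by linarith
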